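/- Let S be an inverse semigroup and let F be a filter in E(S). Define F̄ = {s ∈ S : for all f ∈ F, inv(s)·f·s ∈ F and s·f·inv(s) ∈ F}. Then F̄ is a closed inverse subsemigroup of S whose set of idempotents is exactly F. -/
import Mathlib


namespace InvSgpPaper

/-- `inv` makes the semigroup `S` an inverse semigroup: `a * inv a * a = a`,
`inv a * a * inv a = inv a`, and all idempotents commute. -/
structure IsInvSgp (S : Type*) [Semigroup S] (inv : S → S) : Prop where
  mul_inv_mul : ∀ a : S, a * inv a * a = a
  inv_mul_inv : ∀ a : S, inv a * a * inv a = inv a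
  idem_comm : ∀ e f : S, e * e = e → f * f = f → e * f = f * e

section Defs

variable {S X Y : Type*} [Semigroup S]

/-- The natural partial order on an inverse semigroup:
`a ≤ b` iff `a = e * b` for some idempotent `e`. -/
def nle (a b : S) : Prop := ∃ e : S, e * e = e ∧ a = e * b

/-- The upward closure `A↑` of a subset `A`. -/
def up (A : Set S) : Set S := {s : S | ∃ a ∈ A, nle a s}

/-- A closed inverse subsemigroup: closed under multiplication, under `inv`,
and upward closed (`H = H↑`). -/
def IsClosedInvSub (inv : S → S) (H : Set S) : Prop :=
  (∀ a ∈ H, ∀ b ∈ H, a * b ∈ H) ∧ (∀ a ∈ H, inv a ∈ H) ∧ up H = H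

/-- The left coset `(sH)↑ = {x | s * h ≤ x for some h ∈ H}`. -/
def lcoset (s : S) (H : Set S) : Set S := {x : S | ∃ h ∈ H, nle (s * h) x}

/-- The set of idempotents of a subset `A`. -/
def idemSet (A : Set S) : Set S := {e ∈ A | e * e = e}

/-- A filter in `E(S)`: a nonempty set of idempotents closed under
multiplication and upward closed within `E(S)`. -/
def IsFilterE (F : Set S) : Prop :=
  F.Nonempty ∧ (∀ e ∈ F, e * e = e) ∧ (∀ e ∈ F, ∀ f ∈ F, e * f ∈ F) ∧
    (∀ e ∈ F, ∀ f : S, f * f = f → nle e f → f ∈ F)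

/-- `F̄ = {s ∈ S : ∀ f ∈ F, inv s * f * s ∈ F ∧ s * f * inv s ∈ F}`. -/
def fbar (inv : S → S) (F : Set S) : Set S :=
  {s : S | ∀ f ∈ F, inv s * f * s ∈ F ∧ s * f * inv s ∈ F}

/-- The minimum group congruence `σ`: `a σ b` iff some `c` satisfies `c ≤ a` and `c ≤ b`. -/
def sigmaRel (a b : S) : Prop := ∃ c : S, nle c a ∧ nle c b

/-- The elementwise product of two subsets. -/
def setMul (A B : Set S) : Set S := {x : S | ∃ a ∈ A, ∃ b ∈ B, x = a * b}

/-- The elementwise inverse `A⁻¹` of a subset. -/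
def setInv (inv : S → S) (A : Set S) : Set S := inv '' A

/-- An atlas: a subset `A` with `A·A⁻¹·A = A`. -/
def IsAtlas (inv : S → S) (A : Set S) : Prop := setMul (setMul A (setInv inv A)) A = A

/-- A (down-)directed subset: nonempty, and any two elements have a common
lower bound inside it. -/
def IsDirectedSet (A : Set S) : Prop :=
  A.Nonempty ∧ ∀ a ∈ A, ∀ b ∈ A, ∃ c ∈ A, nle c a ∧ nle c b

/-- An action of `S` on `X` by partial maps, axioms (A1) and (A2). -/
def IsAction (act : S → X → Option X) : Prop :=
  (∀ e : S, e * e = e → ∀ x y : X, act e x = some y → y = x) ∧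
    (∀ (s t : S) (x : X), act (s * t) x = (act t x).bind (act s))

/-- Transitivity of an action. -/
def IsTransitiveAct (act : S → X → Option X) : Prop :=
  ∀ x y : X, ∃ s : S, act s x = some y

/-- Effectiveness of an action: every point is in the domain of some element. -/
def IsEffectiveAct (act : S → X → Option X) : Prop :=
  ∀ x : X, ∃ (s : S) (x' : X), act s x = some x'

/-- The stabilizer of a point. -/
def stab (act : S → X → Option X) (x : X) : Set S := {s : S | act s x = some x}

/-- A morphism of `S`-actions. -/
def IsMorphism (actX : S → X → Option X) (actY : S → Y → Option Y) (α : X → Y) : Prop :=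
  ∀ (s : S) (x x' : X), actX s x = some x' → actY s (α x) = some (α x')

/-- A strong morphism of `S`-actions. -/
def IsStrongMorphism (actX : S → X → Option X) (actY : S → Y → Option Y)
    (α : X → Y) : Prop :=
  IsMorphism actX actY α ∧
    ∀ (s : S) (x : X) (y' : Y), actY s (α x) = some y' → ∃ x' : X, actX s x = some x'

end Defs

section Aux

variable {S : Type*} [Semigroup S] {inv : S → S}

lemma idem_ia (hS : IsInvSgp S inv) (a : S) : (inv a * a) * (inv a * a) = inv a * a := by
  calc (inv a * a) * (inv a * a) = (inv a * a * inv a) * a := by simp [mul_assoc]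
    _ = inv a * a := by rw [hS.inv_mul_inv]

lemma idem_ai (hS : IsInvSgp S inv) (a : S) : (a * inv a) * (a * inv a) = a * inv a := by
  calc (a * inv a) * (a * inv a) = (a * inv a * a) * inv a := by simp [mul_assoc]
    _ = a * inv a := by rw [hS.mul_inv_mul]

lemma inv_unique (hS : IsInvSgp S inv) {a x y : S} (hx1 : a * x * a = a) (hx2 : x * a * x = x)
    (hy1 : a * y * a = a) (hy2 : y * a * y = y) : x = y := by
  have hax : (a * x) * (a * x) = a * x := by
    have h : (a * x) * (a * x) = a * (x * a * x) := by simp [mul_assoc]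
    rw [h, hx2]
  have hay : (a * y) * (a * y) = a * y := by
    have h : (a * y) * (a * y) = a * (y * a * y) := by simp [mul_assoc]
    rw [h, hy2]
  have hxa : (x * a) * (x * a) = x * a := by
    have h : (x * a) * (x * a) = (x * a * x) * a := by simp [mul_assoc]
    rw [h, hx2]
  have hya : (y * a) * (y * a) = y * a := by
    have h : (y * a) * (y * a) = (y * a * y) * a := by simp [mul_assoc]
    rw [h, hy2]
  have k1 : x = (x * a) * y := by
    calc x = (x * a) * x := hx2.symm
      _ = (x * (a * y * a)) * x := by rw [hy1]
      _ = x * ((a * y) * (a * x)) := by simp [mul_assoc]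
      _ = x * ((a * x) * (a * y)) := by rw [hS.idem_comm _ _ hay hax]
      _ = (x * a * x) * (a * y) := by simp [mul_assoc]
      _ = (x * a) * y := by rw [hx2]; simp [mul_assoc]
  have k2 : y = (x * a) * y := by
    calc y = (y * a) * y := hy2.symm
      _ = (y * (a * x * a)) * y := by rw [hx1]
      _ = ((y * a) * (x * a)) * y := by simp [mul_assoc]
      _ = ((x * a) * (y * a)) * y := by rw [hS.idem_comm _ _ hya hxa]
      _ = (x * a) * (y * a * y) := by simp [mul_assoc]
      _ = (x * a) * y := by rw [hy2]
  rw [k1, ← k2]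

lemma inv_inv (hS : IsInvSgp S inv) (a : S) : inv (inv a) = a :=
  inv_unique hS (hS.mul_inv_mul (inv a)) (hS.inv_mul_inv (inv a))
    (hS.inv_mul_inv a) (hS.mul_inv_mul a)

lemma inv_idem (hS : IsInvSgp S inv) {e : S} (he : e * e = e) : inv e = e := by
  have h : e * e * e = e := by rw [he, he]
  exact inv_unique hS (hS.mul_inv_mul e) (hS.inv_mul_inv e) h h

lemma inv_mul (hS : IsInvSgp S inv) (a b : S) : inv (a * b) = inv b * inv a := by
  have h1 : (a * b) * (inv b * inv a) * (a * b) = a * b := by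
    calc (a * b) * (inv b * inv a) * (a * b)
        = a * ((b * inv b) * (inv a * a)) * b := by simp [mul_assoc]
      _ = a * ((inv a * a) * (b * inv b)) * b := by
          rw [hS.idem_comm _ _ (idem_ai hS b) (idem_ia hS a)]
      _ = (a * inv a * a) * (b * inv b * b) := by simp [mul_assoc]
      _ = a * b := by rw [hS.mul_inv_mul, hS.mul_inv_mul]
  have h2 : (inv b * inv a) * (a * b) * (inv b * inv a) = inv b * inv a := by
    calc (inv b * inv a) * (a * b) * (inv b * inv a)
        = inv b * ((inv a * a) * (b * inv b)) * inv a := by simp [mul_assoc]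
      _ = inv b * ((b * inv b) * (inv a * a)) * inv a := by
          rw [hS.idem_comm _ _ (idem_ia hS a) (idem_ai hS b)]
      _ = (inv b * b * inv b) * (inv a * a * inv a) := by simp [mul_assoc]
      _ = inv b * inv a := by rw [hS.inv_mul_inv, hS.inv_mul_inv]
  exact inv_unique hS (hS.mul_inv_mul (a*b)) (hS.inv_mul_inv (a*b)) h1 h2

lemma idem_mul (hS : IsInvSgp S inv) {e f : S} (he : e * e = e) (hf : f * f = f) :
    (e * f) * (e * f) = e * f := by
  calc (e * f) * (e * f) = e * ((f * e) * f) := by simp [mul_assoc]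
    _ = e * ((e * f) * f) := by rw [hS.idem_comm _ _ hf he]
    _ = (e * e) * (f * f) := by simp [mul_assoc]
    _ = e * f := by rw [he, hf]

lemma conj_idem (hS : IsInvSgp S inv) {e : S} (he : e * e = e) (a : S) :
    (inv a * e * a) * (inv a * e * a) = inv a * e * a := by
  calc (inv a * e * a) * (inv a * e * a)
      = inv a * (e * (a * inv a)) * (e * a) := by simp [mul_assoc]
    _ = inv a * ((a * inv a) * e) * (e * a) := by rw [hS.idem_comm _ _ he (idem_ai hS a)]
    _ = (inv a * a * inv a) * ((e * e) * a) := by simp [mul_assoc]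
    _ = inv a * e * a := by rw [hS.inv_mul_inv, he]; simp [mul_assoc]

lemma conj_idem' (hS : IsInvSgp S inv) {e : S} (he : e * e = e) (a : S) :
    (a * e * inv a) * (a * e * inv a) = a * e * inv a := by
  have h := conj_idem hS he (inv a)
  rwa [inv_inv hS] at h

end Aux


/-- For a filter `F` in `E(S)`, the set `F̄` is a closed inverse
subsemigroup of `S` whose set of idempotents is exactly `F`. -/
theorem stmt3 {S : Type*} [Semigroup S] (inv : S → S) (hS : IsInvSgp S inv)
    (F : Set S) (hF : IsFilterE F) :
    IsClosedInvSub inv (fbar inv F) ∧ idemSet (fbar inv F) = F := by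
  obtain ⟨hne, hFid, hFmul, hFup⟩ := hF
  have hmul : ∀ a ∈ fbar inv F, ∀ b ∈ fbar inv F, a * b ∈ fbar inv F := by
    intro a ha b hb f hf
    constructor
    · rw [show inv (a*b) * f * (a*b) = inv b * (inv a * f * a) * b by
        rw [inv_mul hS]; simp [mul_assoc]]
      exact (hb _ ((ha f hf).1)).1
    · rw [show (a*b) * f * inv (a*b) = a * (b * f * inv b) * inv a by
        rw [inv_mul hS]; simp [mul_assoc]]
      exact (ha _ ((hb f hf).2)).2
  have hinv : ∀ a ∈ fbar inv F, inv a ∈ fbar inv F := by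
    intro a ha f hf
    rw [inv_inv hS]
    exact ⟨(ha f hf).2, (ha f hf).1⟩
  have hup : up (fbar inv F) = fbar inv F := by
    apply Set.Subset.antisymm
    · rintro s ⟨a, ha, e, he, hae⟩ f hf
      have hia : inv a = inv s * e := by rw [hae, inv_mul hS, inv_idem hS he]
      constructor
      · have hx : inv a * f * a ∈ F := (ha f hf).1
        have hxeq : inv a * f * a = (inv s * e * s) * (inv s * f * s) := by
          rw [hia, hae]
          calc (inv s * e) * f * (e * s)
              = inv s * ((e * f) * (e * s)) := by simp [mul_assoc]
            _ = inv s * ((f * e) * (e * s)) := by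
                rw [hS.idem_comm _ _ he (hFid f hf)]
            _ = inv s * (f * ((e * e) * s)) := by simp [mul_assoc]
            _ = inv s * (f * (e * s)) := by rw [he]
            _ = inv s * ((f * e) * s) := by simp [mul_assoc]
            _ = inv s * ((e * f) * s) := by
                rw [hS.idem_comm _ _ he (hFid f hf)]
            _ = ((inv s * s * inv s) * (e * f)) * s := by
                rw [hS.inv_mul_inv]; simp [mul_assoc]
            _ = inv s * (((s * inv s) * e) * (f * s)) := by simp [mul_assoc]
            _ = inv s * ((e * (s * inv s)) * (f * s)) := by
                rw [hS.idem_comm _ _ (idem_ai hS s) he]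
            _ = (inv s * e * s) * (inv s * f * s) := by simp [mul_assoc]
        exact hFup _ (hxeq ▸ hx) _ (conj_idem hS (hFid f hf) s)
          ⟨inv s * e * s, conj_idem hS he s, rfl⟩
      · have hx : a * f * inv a ∈ F := (ha f hf).2
        have hxeq : a * f * inv a = e * (s * f * inv s) := by
          rw [hia, hae]
          calc (e * s) * f * (inv s * e)
              = e * ((s * f * inv s) * e) := by simp [mul_assoc]
            _ = e * (e * (s * f * inv s)) := by
                rw [hS.idem_comm _ _ (conj_idem' hS (hFid f hf) s) he]
            _ = (e * e) * (s * f * inv s) := by simp [mul_assoc]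
            _ = e * (s * f * inv s) := by rw [he]
        exact hFup _ (hxeq ▸ hx) _ (conj_idem' hS (hFid f hf) s) ⟨e, he, hxeq ▸ hxeq.symm ▸ rfl⟩
    · intro s hs
      exact ⟨s, hs, s * inv s, idem_ai hS s, (hS.mul_inv_mul s).symm⟩
  refine ⟨⟨hmul, hinv, hup⟩, Set.Subset.antisymm ?_ ?_⟩
  · rintro e ⟨he, hee⟩
    obtain ⟨f0, hf0⟩ := hne
    have hx : inv e * f0 * e ∈ F := (he f0 hf0).1
    rw [inv_idem hS hee] at hx
    exact hFup _ hx _ hee ⟨e * f0, idem_mul hS hee (hFid f0 hf0), rfl⟩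
  · intro f hf
    have hff := hFid f hf
    refine ⟨?_, hff⟩
    intro g hg
    have key : f * g * f = g * f := by
      rw [hS.idem_comm f g hff (hFid g hg)]
      rw [show g * f * f = g * (f * f) by simp [mul_assoc], hff]
    constructor
    · rw [inv_idem hS hff, key]; exact hFmul g hg f hf
    · rw [inv_idem hS hff, key]; exact hFmul g hg f hf

end InvSgpPaper
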